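/- For every nonempty Polish space X and every reduced continuous pair-coloring c on X, c_min ≤ c; consequently hm(c_min) ≤ hm(c). -/

import Mathlib

open Cardinal Topology

/-- The least index where two sequences differ. -/
noncomputable def Delta {α : Type*} (x y : ℕ → α) : ℕ := sInf {n | x n ≠ y n}

/-- A set is homogeneous for a pair-coloring `c` if `c` is constant on pairs of
distinct elements of the set. -/
def IsHomog {X : Type*} (c : X → X → Fin 2) (H : Set X) : Prop :=
  ∃ i : Fin 2, ∀ x ∈ H, ∀ y ∈ H, x ≠ y → c x y = i

/-- The homogeneity number of a pair-coloring: the least cardinality of a family of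
homogeneous sets covering the space. -/
noncomputable def hm {X : Type*} (c : X → X → Fin 2) : Cardinal :=
  sInf { κ | ∃ F : Set (Set X), #F = κ ∧ (∀ H ∈ F, IsHomog c H) ∧ ⋃₀ F = Set.univ }

/-- The homogeneity number of the restriction of a coloring to a subset. -/
noncomputable def hmOn {X : Type*} (c : X → X → Fin 2) (Y : Set X) : Cardinal :=
  sInf { κ | ∃ F : Set (Set X), #F = κ ∧ (∀ H ∈ F, H ⊆ Y ∧ IsHomog c H) ∧ ⋃₀ F = Y }

/-- A pair-coloring is continuous if it is continuous on `X × X` minus the diagonal. -/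
def ContColoring {X : Type*} [TopologicalSpace X] (c : X → X → Fin 2) : Prop :=
  Continuous fun p : {q : X × X // q.1 ≠ q.2} => c p.val.1 p.val.2

/-- Symmetry of a pair-coloring on distinct points. -/
def SymmColoring {X : Type*} (c : X → X → Fin 2) : Prop :=
  ∀ x y : X, x ≠ y → c x y = c y x

/-- A continuous pair-coloring is reduced if no nonempty open set is homogeneous. -/
def Reduced {X : Type*} [TopologicalSpace X] (c : X → X → Fin 2) : Prop :=
  ContColoring c ∧ ∀ U : Set X, IsOpen U → U.Nonempty → ¬ IsHomog c U

/-- The coloring `c_min` on the Cantor space: the parity of the first difference. -/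
noncomputable def cmin : (ℕ → Bool) → (ℕ → Bool) → Fin 2 :=
  fun x y => if Even (Delta x y) then 0 else 1

/-- The coloring `c_parity` on the Baire space: the parity of the first difference. -/
noncomputable def cparity : (ℕ → ℕ) → (ℕ → ℕ) → Fin 2 :=
  fun x y => if Even (Delta x y) then 0 else 1

namespace CminAux

variable {X : Type} [MetricSpace X]

/-- color by parity -/
noncomputable def col (n : ℕ) : Fin 2 := if Even n then 0 else 1

/-- Bundled properties of a split pair of open sets. -/
def Good (c : X → X → Fin 2) (U : Set X) (i : Fin 2) (ε : ℝ) (p : Set X × Set X) : Prop :=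
  IsOpen p.1 ∧ IsOpen p.2 ∧ p.1.Nonempty ∧ p.2.Nonempty ∧
  Bornology.IsBounded p.1 ∧ Bornology.IsBounded p.2 ∧
  closure p.1 ⊆ U ∧ closure p.2 ⊆ U ∧ Disjoint (closure p.1) (closure p.2) ∧
  Metric.diam p.1 ≤ ε ∧ Metric.diam p.2 ≤ ε ∧
  ∀ a ∈ closure p.1, ∀ b ∈ closure p.2, c a b = i

theorem exists_good (c : X → X → Fin 2) (hcont : ContColoring c)
    (hred : ∀ U : Set X, IsOpen U → U.Nonempty → ¬ IsHomog c U)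
    (U : Set X) (hU : IsOpen U) (hne : U.Nonempty) (i : Fin 2) {ε : ℝ} (hε : 0 < ε) :
    ∃ p : Set X × Set X, Good c U i ε p := by
  -- find a pair of color i inside U
  have h1 := hred U hU hne
  rw [IsHomog] at h1
  push_neg at h1
  obtain ⟨a, ha, b, hb, hab, hcab⟩ := h1 (1 - i)
  have hdec : ∀ a b : Fin 2, a ≠ 1 - b → a = b := by decide
  have hci : c a b = i := hdec _ _ hcab
  -- the set of pairs of color i is open
  have hD : IsOpen {q : X × X | q.1 ≠ q.2} := isOpen_ne_fun continuous_fst continuous_snd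
  have h1 : IsOpen ((fun p : {q : X × X // q.1 ≠ q.2} => c p.val.1 p.val.2) ⁻¹' {i}) :=
    (isOpen_discrete _).preimage hcont
  have hS : IsOpen {p : X × X | p.1 ≠ p.2 ∧ c p.1 p.2 = i} := by
    have h2 := hD.isOpenMap_subtype_val _ h1
    convert h2 using 1
    ext q
    constructor
    · rintro ⟨hq1, hq2⟩
      exact ⟨⟨q, hq1⟩, hq2, rfl⟩
    · rintro ⟨⟨q', hq'⟩, hq2, rfl⟩
      exact ⟨hq', hq2⟩
  obtain ⟨V₀, W₀, hV₀, hW₀, haV₀, hbW₀, hsub⟩ :=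
    isOpen_prod_iff.1 hS a b ⟨hab, hci⟩
  obtain ⟨r1, hr1, hball1⟩ := Metric.isOpen_iff.1 (hV₀.inter hU) a ⟨haV₀, ha⟩
  obtain ⟨r2, hr2, hball2⟩ := Metric.isOpen_iff.1 (hW₀.inter hU) b ⟨hbW₀, hb⟩
  have hdab : 0 < dist a b := dist_pos.2 hab
  set r : ℝ := min (min (r1 / 2) (r2 / 2)) (min (ε / 2) (dist a b / 4)) with hr
  have hrpos : 0 < r := by positivity
  have hrr1 : r < r1 := lt_of_le_of_lt ((min_le_left _ _).trans (min_le_left _ _)) (by linarith)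
  have hrr2 : r < r2 := lt_of_le_of_lt ((min_le_left _ _).trans (min_le_right _ _)) (by linarith)
  have hrε : r ≤ ε / 2 := (min_le_right _ _).trans (min_le_left _ _)
  have hrd : r ≤ dist a b / 4 := (min_le_right _ _).trans (min_le_right _ _)
  refine ⟨(Metric.ball a r, Metric.ball b r), ?_, ?_, ?_, ?_, ?_, ?_, ?_, ?_, ?_, ?_, ?_, ?_⟩
  · exact Metric.isOpen_ball
  · exact Metric.isOpen_ball
  · exact ⟨a, Metric.mem_ball_self hrpos⟩
  · exact ⟨b, Metric.mem_ball_self hrpos⟩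
  · exact Metric.isBounded_ball
  · exact Metric.isBounded_ball
  · exact fun z hz => (hball1 (Metric.closedBall_subset_ball hrr1
      (Metric.closure_ball_subset_closedBall hz))).2
  · exact fun z hz => (hball2 (Metric.closedBall_subset_ball hrr2
      (Metric.closure_ball_subset_closedBall hz))).2
  · rw [Set.disjoint_left]
    intro z hz1 hz2
    have h1 : dist z a ≤ r := Metric.closure_ball_subset_closedBall hz1
    have h2 : dist z b ≤ r := Metric.closure_ball_subset_closedBall hz2
    have := dist_triangle a z b
    rw [dist_comm a z] at this
    linarith
  · calc Metric.diam (Metric.ball a r) ≤ 2 * r := Metric.diam_ball hrpos.le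
      _ ≤ ε := by linarith
  · calc Metric.diam (Metric.ball b r) ≤ 2 * r := Metric.diam_ball hrpos.le
      _ ≤ ε := by linarith
  · intro a' ha' b' hb'
    have ha'' : a' ∈ V₀ := (hball1 (Metric.closedBall_subset_ball hrr1
      (Metric.closure_ball_subset_closedBall ha'))).1
    have hb'' : b' ∈ W₀ := (hball2 (Metric.closedBall_subset_ball hrr2
      (Metric.closure_ball_subset_closedBall hb'))).1
    exact (hsub (Set.mk_mem_prod ha'' hb'')).2


open scoped Classical in
/-- A choice of a good pair, if one exists. -/
noncomputable def nxt (c : X → X → Fin 2) (U : Set X) (i : Fin 2) (ε : ℝ) : Set X × Set X :=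
  if h : ∃ p : Set X × Set X, Good c U i ε p then h.choose else (∅, ∅)

theorem nxt_good {c : X → X → Fin 2} {U : Set X} {i : Fin 2} {ε : ℝ}
    (h : ∃ p : Set X × Set X, Good c U i ε p) : Good c U i ε (nxt c U i ε) := by
  classical
  rw [nxt]
  rw [dif_pos h]
  exact h.choose_spec

/-- The Cantor scheme of open sets, indexed by reversed finite binary sequences. -/
noncomputable def sch (c : X → X → Fin 2) (x₀ : X) : List Bool → Set X
  | [] => Metric.ball x₀ (1 / 2)
  | (b :: s) =>
      if b then (nxt c (sch c x₀ s) (col s.length) ((1 / 2) ^ (s.length + 1))).2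
      else (nxt c (sch c x₀ s) (col s.length) ((1 / 2) ^ (s.length + 1))).1

variable {c : X → X → Fin 2} {x₀ : X}

theorem sch_basic (hcont : ContColoring c)
    (hred : ∀ U : Set X, IsOpen U → U.Nonempty → ¬ IsHomog c U) :
    ∀ s : List Bool, IsOpen (sch c x₀ s) ∧ (sch c x₀ s).Nonempty ∧
      Bornology.IsBounded (sch c x₀ s) ∧ Metric.diam (sch c x₀ s) ≤ (1 / 2) ^ s.length := by
  intro s
  induction s with
  | nil =>
    refine ⟨Metric.isOpen_ball, ⟨x₀, Metric.mem_ball_self (by norm_num)⟩,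
      Metric.isBounded_ball, ?_⟩
    calc Metric.diam (Metric.ball x₀ (1 / 2)) ≤ 2 * (1 / 2) :=
          Metric.diam_ball (by norm_num)
      _ ≤ (1 / 2) ^ List.length ([] : List Bool) := by norm_num
  | cons b s ih =>
    obtain ⟨ho, hne, -, -⟩ := ih
    have hg := nxt_good (exists_good c hcont hred _ ho hne (col s.length)
      (by positivity : (0:ℝ) < (1 / 2) ^ (s.length + 1)))
    obtain ⟨g1, g2, g3, g4, g5, g6, g7, g8, g9, g10, g11, g12⟩ := hg
    cases b <;> simp only [sch, if_true, if_false, List.length_cons] <;>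
      exact ⟨by assumption, by assumption, by assumption, by assumption⟩

theorem sch_good (hcont : ContColoring c)
    (hred : ∀ U : Set X, IsOpen U → U.Nonempty → ¬ IsHomog c U) (s : List Bool) :
    Good c (sch c x₀ s) (col s.length) ((1 / 2) ^ (s.length + 1))
      (nxt c (sch c x₀ s) (col s.length) ((1 / 2) ^ (s.length + 1))) := by
  obtain ⟨ho, hne, -, -⟩ := sch_basic (x₀ := x₀) hcont hred s
  exact nxt_good (exists_good c hcont hred _ ho hne _ (by positivity))

theorem sch_closure_subset (hcont : ContColoring c)
    (hred : ∀ U : Set X, IsOpen U → U.Nonempty → ¬ IsHomog c U) (b : Bool) (s : List Bool) :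
    closure (sch c x₀ (b :: s)) ⊆ sch c x₀ s := by
  have hg := sch_good (x₀ := x₀) hcont hred s
  cases b <;> simp only [sch, if_true, if_false] <;>
    [exact hg.2.2.2.2.2.2.1; exact hg.2.2.2.2.2.2.2.1]

theorem sch_disjoint (hcont : ContColoring c)
    (hred : ∀ U : Set X, IsOpen U → U.Nonempty → ¬ IsHomog c U) (s : List Bool) :
    Disjoint (closure (sch c x₀ (false :: s))) (closure (sch c x₀ (true :: s))) := by
  have hg := sch_good (x₀ := x₀) hcont hred s
  simpa only [sch, if_true, if_false, Bool.false_eq_true] using hg.2.2.2.2.2.2.2.2.1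

theorem sch_color (hcont : ContColoring c)
    (hred : ∀ U : Set X, IsOpen U → U.Nonempty → ¬ IsHomog c U) (s : List Bool) :
    ∀ a ∈ closure (sch c x₀ (false :: s)), ∀ b ∈ closure (sch c x₀ (true :: s)),
      c a b = col s.length := by
  have hg := sch_good (x₀ := x₀) hcont hred s
  simpa only [sch, if_true, if_false, Bool.false_eq_true] using hg.2.2.2.2.2.2.2.2.2.2.2

/-- Reversed prefix of an infinite binary sequence. -/
def pre (x : ℕ → Bool) : ℕ → List Bool
  | 0 => []
  | n + 1 => x n :: pre x n

theorem pre_length (x : ℕ → Bool) : ∀ n, (pre x n).length = n := by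
  intro n; induction n with
  | zero => rfl
  | succ n ih => simp [pre, ih]

theorem pre_eq {x y : ℕ → Bool} : ∀ n, (∀ k < n, x k = y k) → pre x n = pre y n := by
  intro n
  induction n with
  | zero => intro _; rfl
  | succ n ih =>
    intro h
    simp only [pre, ih (fun k hk => h k (hk.trans (Nat.lt_succ_self n))),
      h n (Nat.lt_succ_self n)]

theorem sch_pre_mono (hcont : ContColoring c)
    (hred : ∀ U : Set X, IsOpen U → U.Nonempty → ¬ IsHomog c U) (x : ℕ → Bool)
    {m n : ℕ} (h : m ≤ n) : sch c x₀ (pre x n) ⊆ sch c x₀ (pre x m) := by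
  induction n with
  | zero => rw [Nat.le_zero.1 h]
  | succ n ih =>
    rcases Nat.lt_or_ge m (n + 1) with h' | h'
    · exact (subset_closure.trans (sch_closure_subset hcont hred (x n) (pre x n))).trans
        (ih (Nat.lt_succ_iff.1 h'))
    · rw [Nat.le_antisymm h h']

end CminAux

open CminAux in
/-- For every nonempty Polish space `X` and every reduced continuous pair-coloring `c`
on `X`, `c_min ≤ c`; consequently `hm(c_min) ≤ hm(c)`. -/
theorem stmt0 (X : Type) [TopologicalSpace X] [PolishSpace X] [Nonempty X]
    (c : X → X → Fin 2) (hsym : SymmColoring c) (hcont : ContColoring c)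
    (hred : Reduced c) :
    (∃ e : (ℕ → Bool) → X, IsEmbedding e ∧
        ∀ x y : ℕ → Bool, x ≠ y → c (e x) (e y) = cmin x y) ∧
      hm cmin ≤ hm c := by
  letI := TopologicalSpace.upgradeIsCompletelyMetrizable X
  obtain ⟨x₀⟩ := ‹Nonempty X›
  have hred2 : ∀ U : Set X, IsOpen U → U.Nonempty → ¬ IsHomog c U := hred.2
  -- choose points in the scheme sets
  have hpt : ∀ (x : ℕ → Bool) (n : ℕ), ∃ z, z ∈ sch c x₀ (pre x n) := fun x n =>
    (sch_basic (x₀ := x₀) hcont hred2 (pre x n)).2.1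
  choose p hp using hpt
  -- each sequence is Cauchy
  have hcauchy : ∀ x : ℕ → Bool, ∃ L, Filter.Tendsto (p x) Filter.atTop (nhds L) := by
    intro x
    refine cauchySeq_tendsto_of_complete (cauchySeq_of_le_geometric (1 / 2) 1
      (by norm_num) fun n => ?_)
    have h1 : p x (n + 1) ∈ sch c x₀ (pre x n) :=
      sch_pre_mono hcont hred2 x (Nat.le_succ n) (hp x (n + 1))
    have h2 := (sch_basic (x₀ := x₀) hcont hred2 (pre x n))
    calc dist (p x n) (p x (n + 1)) ≤ Metric.diam (sch c x₀ (pre x n)) :=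
          Metric.dist_le_diam_of_mem h2.2.2.1 (hp x n) h1
      _ ≤ (1 / 2) ^ (pre x n).length := h2.2.2.2
      _ = 1 * (1 / 2) ^ n := by rw [pre_length, one_mul]
  choose e he using hcauchy
  -- the limit belongs to all closures along the branch
  have hmem : ∀ (x : ℕ → Bool) (n : ℕ), e x ∈ closure (sch c x₀ (pre x n)) := by
    intro x n
    refine isClosed_closure.mem_of_tendsto (he x)
      ((Filter.eventually_ge_atTop n).mono fun m hm => ?_)
    exact subset_closure (sch_pre_mono hcont hred2 x hm (hp x m))
  -- key color + injectivity fact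
  have hkey : ∀ x y : ℕ → Bool, x ≠ y → c (e x) (e y) = cmin x y ∧ e x ≠ e y := by
    intro x y hxy
    set n := Delta x y with hn
    have hset : {k | x k ≠ y k}.Nonempty := Function.ne_iff.1 hxy
    have hdn : x n ≠ y n := Nat.sInf_mem hset
    have hlt : ∀ k < n, x k = y k := fun k hk =>
      not_not.1 (Nat.notMem_of_lt_sInf (s := {k | x k ≠ y k}) hk)
    have hpre : pre x n = pre y n := pre_eq n hlt
    have hx1 : e x ∈ closure (sch c x₀ (x n :: pre x n)) := hmem x (n + 1)
    have hy1 : e y ∈ closure (sch c x₀ (y n :: pre x n)) := by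
      have := hmem y (n + 1)
      rwa [show pre y (n + 1) = y n :: pre x n by rw [pre, hpre]] at this
    have hcol : cmin x y = col n := rfl
    have hlen : (pre x n).length = n := pre_length x n
    cases hxn : x n with
    | false =>
      have hyn : y n = true := by
        cases hyn : y n with
        | false => exact absurd (by rw [hxn, hyn]) hdn
        | true => rfl
      rw [hxn] at hx1; rw [hyn] at hy1
      have hne' : e x ≠ e y :=
        (sch_disjoint (x₀ := x₀) hcont hred2 (pre x n)).ne_of_mem hx1 hy1
      refine ⟨?_, hne'⟩
      rw [hcol, ← hlen]
      exact sch_color hcont hred2 (pre x n) _ hx1 _ hy1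
    | true =>
      have hyn : y n = false := by
        cases hyn : y n with
        | true => exact absurd (by rw [hxn, hyn]) hdn
        | false => rfl
      rw [hxn] at hx1; rw [hyn] at hy1
      have hne' : e y ≠ e x :=
        (sch_disjoint (x₀ := x₀) hcont hred2 (pre x n)).ne_of_mem hy1 hx1
      refine ⟨?_, hne'.symm⟩
      rw [hsym _ _ hne'.symm, hcol, ← hlen]
      exact sch_color hcont hred2 (pre x n) _ hy1 _ hx1
  have hinj : Function.Injective e := by
    intro x y h
    by_contra hxy
    exact (hkey x y hxy).2 h
  -- continuity of e
  have hconte : Continuous e := by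
    rw [continuous_iff_continuousAt]
    intro x
    rw [ContinuousAt, Metric.tendsto_nhds]
    intro ε hε
    obtain ⟨n, hn⟩ := exists_pow_lt_of_lt_one hε (by norm_num : (1:ℝ) / 2 < 1)
    have hev : ∀ᶠ y : ℕ → Bool in nhds x, ∀ k ∈ Finset.range n, y k = x k := by
      rw [Filter.eventually_all_finset]
      intro k _
      have : {z : Bool | z = x k} ∈ nhds (x k) :=
        IsOpen.mem_nhds (isOpen_discrete _) rfl
      exact (continuous_apply k).continuousAt this
    refine hev.mono fun y hy => ?_
    have hpre : pre y n = pre x n :=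
      pre_eq n fun k hk => hy k (Finset.mem_range.2 hk)
    have h1 : e y ∈ closure (sch c x₀ (pre x n)) := hpre ▸ hmem y n
    have h2 := sch_basic (x₀ := x₀) hcont hred2 (pre x n)
    calc dist (e y) (e x) ≤ Metric.diam (closure (sch c x₀ (pre x n))) :=
          Metric.dist_le_diam_of_mem h2.2.2.1.closure h1 (hmem x n)
      _ = Metric.diam (sch c x₀ (pre x n)) := Metric.diam_closure _
      _ ≤ (1 / 2) ^ (pre x n).length := h2.2.2.2
      _ = (1 / 2) ^ n := by rw [pre_length]
      _ < ε := hn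
  have hemb : IsEmbedding e := (hconte.isClosedEmbedding hinj).isEmbedding
  refine ⟨⟨e, hemb, fun x y hxy => (hkey x y hxy).1⟩, ?_⟩
  -- hm cmin ≤ hm c
  have hne0 : { κ | ∃ F : Set (Set X), #F = κ ∧ (∀ H ∈ F, IsHomog c H) ∧
      ⋃₀ F = Set.univ }.Nonempty := by
    refine ⟨_, Set.range (fun z : X => ({z} : Set X)), rfl, ?_, ?_⟩
    · rintro H ⟨z, rfl⟩
      exact ⟨0, fun a ha b hb hab => absurd (ha.trans hb.symm) hab⟩
    · ext z
      simp only [Set.mem_sUnion, Set.mem_range, Set.mem_univ, iff_true]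
      exact ⟨{z}, ⟨z, rfl⟩, rfl⟩
  refine le_csInf hne0 ?_
  rintro κ ⟨F, rfl, hhom, hcov⟩
  refine le_trans (csInf_le' ?_) (Cardinal.mk_image_le (f := fun H => e ⁻¹' H) (s := F))
  refine ⟨(fun H => e ⁻¹' H) '' F, rfl, ?_, ?_⟩
  · rintro H' ⟨H, hH, rfl⟩
    obtain ⟨i, hi⟩ := hhom H hH
    refine ⟨i, fun a ha b hb hab => ?_⟩
    rw [← (hkey a b hab).1]
    exact hi (e a) ha (e b) hb fun h => hab (hinj h)
  · ext z
    simp only [Set.mem_sUnion, Set.mem_image, Set.mem_univ, iff_true]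
    have : e z ∈ ⋃₀ F := hcov ▸ Set.mem_univ _
    obtain ⟨H, hH, hz⟩ := this
    exact ⟨e ⁻¹' H, ⟨H, hH, rfl⟩, hz⟩
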